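/- Let W(ξ,t) = −1/(1+|ξ|²+|t|²) on ℝ³ × ℝ (the UV-regularized Nelson model, d = 3). Then there is a constant C < ∞ such that |∇_ξ Q(x,ξ,a)| ≤ C(1+|a|)^{−1} for all x ∈ 𝒳, a ≥ 0 and ξ ∈ ℝ³; in particular Q(x,ξ,a) ≤ C(1+|ξ|) uniformly in x ∈ 𝒳 and a ≥ 0, i.e. the Nelson model satisfies hypothesis (H2). Moreover the Nelson model satisfies hypothesis (H1). -/

import Mathlib

open MeasureTheory Set
open scoped ENNReal NNReal Real

noncomputable section

/-- `d`-dimensional Euclidean space. -/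
abbrev Ed (d : ℕ) : Type := EuclideanSpace ℝ (Fin d)

/-- The space `𝒳` of increments of continuous paths: continuous maps
`x : ℝ² → ℝ^d` with `x_{tt} = 0` and the cocycle property `x_{su} + x_{ut} = x_{st}`. -/
def Inc (d : ℕ) : Type :=
  {x : C(ℝ × ℝ, Ed d) // (∀ t : ℝ, x (t, t) = 0) ∧
    ∀ s u t : ℝ, x (s, u) + x (u, t) = x (s, t)}

instance (d : ℕ) : TopologicalSpace (Inc d) :=
  instTopologicalSpaceSubtype

instance (d : ℕ) : MeasurableSpace (Inc d) := borel (Inc d)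

/-- The zero increment path. -/
def zeroInc (d : ℕ) : Inc d :=
  ⟨0, by intro t; rfl, by intro s u t; show (0 : Ed d) + 0 = 0; simp⟩

/-- The energy `U_I(x) = ∫_{I×I} W(x_{st}, t-s) dt ds` over `I = [a,b]`. -/
def U {d : ℕ} (W : Ed d → ℝ → ℝ) (a b : ℝ) (x : Inc d) : ℝ :=
  ∫ t in Icc a b, ∫ s in Icc a b, W (x.1 (s, t)) (t - s)

/-- `x ⊗_{[a,b]} y` : the increment path equal to `x` on `[a,b]²` and to `y` outside. -/
def blend {d : ℕ} (a b : ℝ) (x y : Inc d) : Inc d :=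
  ⟨⟨fun p => y.1 (p.1, max a (min b p.1)) + x.1 (max a (min b p.1), max a (min b p.2))
      + y.1 (max a (min b p.2), p.2), by
        have hy := y.1.continuous
        have hx := x.1.continuous
        fun_prop⟩,
    by
      intro t
      show y.1 (t, max a (min b t)) + x.1 (max a (min b t), max a (min b t))
          + y.1 (max a (min b t), t) = 0
      rw [x.2.1, add_zero, y.2.2, y.2.1],
    by
      intro s u t
      show (y.1 (s, max a (min b s)) + x.1 (max a (min b s), max a (min b u))
            + y.1 (max a (min b u), u))
          + (y.1 (u, max a (min b u)) + x.1 (max a (min b u), max a (min b t))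
            + y.1 (max a (min b t), t))
          = y.1 (s, max a (min b s)) + x.1 (max a (min b s), max a (min b t))
            + y.1 (max a (min b t), t)
      have h1 : y.1 (u, max a (min b u)) = - y.1 (max a (min b u), u) :=
        eq_neg_of_add_eq_zero_right (by rw [y.2.2, y.2.1])
      have h2 : x.1 (max a (min b s), max a (min b u)) + x.1 (max a (min b u), max a (min b t))
          = x.1 (max a (min b s), max a (min b t)) := x.2.2 _ _ _
      rw [h1, ← h2]
      abel⟩

/-- The "cone of influence" `J([a,b])`, as a set of pairs `(t,s)`. -/
def Jset (a b : ℝ) : Set (ℝ × ℝ) :=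
  (Ioi b ×ˢ Iio a) ∪ (Iio a ×ˢ Ioi b) ∪ (Icc a b ×ˢ (Icc a b)ᶜ) ∪ ((Icc a b)ᶜ ×ˢ Icc a b)

/-- The integrand of the interaction `V_{[a,b]}(x,y)` at the point `(t,s)`. -/
def Vint {d : ℕ} (W : Ed d → ℝ → ℝ) (a b : ℝ) (x y : Inc d) (p : ℝ × ℝ) : ℝ :=
  W ((blend a b x y).1 (p.2, p.1)) (p.1 - p.2)
    - W ((blend a b (zeroInc d) y).1 (p.2, p.1)) (p.1 - p.2)

/-- The interaction energy
`V_{[a,b]}(x,y) = ∫_{J([a,b])} [W((x⊗y)_{st}, t-s) - W((0⊗y)_{st}, t-s)] dt ds`. -/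
def V {d : ℕ} (W : Ed d → ℝ → ℝ) (a b : ℝ) (x y : Inc d) : ℝ :=
  ∫ p in Jset a b, Vint W a b x y p

/-- The truncated interaction `V_{[a,b]}^{[a',b']}`. -/
def Vtrunc {d : ℕ} (W : Ed d → ℝ → ℝ) (a b a' b' : ℝ) (x y : Inc d) : ℝ :=
  ∫ p in Jset a b ∩ (Icc a' b' ×ˢ Icc a' b'), Vint W a b x y p

/-- `Q(x,ξ,a)` (as an extended-real absolutely convergent double integral). -/
def Qe {d : ℕ} (W : Ed d → ℝ → ℝ) (x : Inc d) (ξ : Ed d) (a : ℝ) : ℝ≥0∞ :=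
  ∫⁻ t in Iio (0 : ℝ), ∫⁻ s in Ioi (0 : ℝ),
    ENNReal.ofReal |W (ξ + x.1 (s, t)) (a + s - t) - W (x.1 (s, t)) (a + s - t)|

/-- `Q(x,ξ,a)` as a real double integral. -/
def Q {d : ℕ} (W : Ed d → ℝ → ℝ) (x : Inc d) (ξ : Ed d) (a : ℝ) : ℝ :=
  ∫ t in Iio (0 : ℝ), ∫ s in Ioi (0 : ℝ),
    |W (ξ + x.1 (s, t)) (a + s - t) - W (x.1 (s, t)) (a + s - t)|

/-- Hypothesis (H1). -/
def H1 {d : ℕ} (W : Ed d → ℝ → ℝ) : Prop :=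
  (∃ C : ℝ, ∀ a b : ℝ, a ≤ b → ∀ x : Inc d, |U W a b x| ≤ C * (b - a) ^ 2) ∧
  (∃ M : ℝ≥0∞, M ≠ ⊤ ∧ ∀ x : Inc d,
      (∫⁻ t : ℝ, ENNReal.ofReal |W (x.1 (0, t)) (|t|)|) ≤ M)

/-- Hypothesis (H2). -/
def H2 {d : ℕ} (W : Ed d → ℝ → ℝ) : Prop :=
  ∃ C : ℝ, ∀ x : Inc d, ∀ ξ : Ed d, ∀ a : ℝ, 0 ≤ a →
    Qe W x ξ a ≤ ENNReal.ofReal (C * (1 + ‖ξ‖))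

/-- Hypothesis (H3). -/
def H3 {d : ℕ} (W : Ed d → ℝ → ℝ) : Prop :=
  ∃ C : ℝ, ∀ x : Inc d,
    (∫⁻ t in Ioi (0 : ℝ), ∫⁻ s in Iio (0 : ℝ),
        ENNReal.ofReal |W (x.1 (s, t)) (t - s) - W 0 (t - s)|) ≤ ENNReal.ofReal C

/-- Hypothesis (H3b) with decay exponent `γ`. -/
def H3b {d : ℕ} (W : Ed d → ℝ → ℝ) (γ : ℝ) : Prop :=
  2 < γ ∧ ∃ C : ℝ, ∀ ξ : Ed d, ∀ t : ℝ, |W ξ t| ≤ C * (1 + |t|) ^ (-γ)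

/-- The Hessian of `W` in its first argument. -/
def HessW {d : ℕ} (W : Ed d → ℝ → ℝ) (ξ : Ed d) (t : ℝ) : Ed d →L[ℝ] Ed d →L[ℝ] ℝ :=
  fderiv ℝ (fun ζ => fderiv ℝ (fun η => W η t) ζ) ξ

/-- Hypothesis (H4) with constants `K` and `α`. -/
def H4 {d : ℕ} (W : Ed d → ℝ → ℝ) (K α : ℝ) : Prop :=
  3 < α ∧ (∀ t : ℝ, ContDiff ℝ 2 (fun ξ => W ξ t)) ∧
    ∀ ξ : Ed d, ∀ t : ℝ, ‖HessW W ξ t‖ ≤ K * (1 + |t|) ^ (-α)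

/-- `μ` is the law of the increments of a two-sided standard `d`-dimensional Brownian
motion: a probability measure whose coordinate increments are centered Gaussians of
variance `t - s` and whose increments over disjoint intervals (and distinct coordinates)
are independent. -/
def IsWienerMeasure {d : ℕ} (μ : Measure (Inc d)) : Prop :=
  IsProbabilityMeasure μ ∧
  (∀ s t : ℝ, s ≤ t → ∀ j : Fin d,
      μ.map (fun x : Inc d => x.1 (s, t) j) =
        ProbabilityTheory.gaussianReal 0 ((t - s).toNNReal)) ∧
  ∀ n : ℕ, ∀ ts : Fin (n + 1) → ℝ, Monotone ts →
    ProbabilityTheory.iIndepFun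
      (fun (p : Fin n × Fin d) (x : Inc d) => x.1 (ts p.1.castSucc, ts p.1.succ) p.2) μ

/-- The measure `μ_{[a,b]} × δ_{[a,b]^c, y}` : increments distributed as `μ` inside `[a,b]`,
frozen to those of `y` outside. -/
def frozenM {d : ℕ} (μ : Measure (Inc d)) (a b : ℝ) (y : Inc d) : Measure (Inc d) :=
  μ.map (fun x => blend a b x y)

/-- The Boltzmann density `e^{-λ U_{[a,b]}(x) - λ V_{[a,b]}(x,y)}`. -/
def dens {d : ℕ} (W : Ed d → ℝ → ℝ) (l a b : ℝ) (y x : Inc d) : ℝ :=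
  Real.exp (-(l * U W a b x) - l * V W a b x y)

/-- The kernel `π_{[a,b]}(dx|y)` of the specification `Π` (normalized Boltzmann measure). -/
def gk {d : ℕ} (μ : Measure (Inc d)) (W : Ed d → ℝ → ℝ) (l a b : ℝ) (y : Inc d) :
    Measure (Inc d) :=
  (((frozenM μ a b y).withDensity fun x => ENNReal.ofReal (dens W l a b y x)) univ)⁻¹ •
    ((frozenM μ a b y).withDensity fun x => ENNReal.ofReal (dens W l a b y x))

/-- Two increment paths agree over the (time) set `s`. -/
def AgreeOn {d : ℕ} (x y : Inc d) (s : Set ℝ) : Prop :=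
  ∀ p : ℝ × ℝ, p.1 ∈ s → p.2 ∈ s → x.1 p = y.1 p

/-- `f` is `𝓕_{[a,b]}`-measurable: it depends only on the increments inside `[a,b]`. -/
def LocalOn {d : ℕ} (f : Inc d → ℝ) (a b : ℝ) : Prop :=
  ∀ x y : Inc d, AgreeOn x y (Icc a b) → f x = f y

/-- `f` is a local function: `𝓕_I`-measurable for some bounded interval `I`. -/
def IsLocal {d : ℕ} (f : Inc d → ℝ) : Prop :=
  ∃ a b : ℝ, LocalOn f a b

/-- `ν` is a Gibbs measure for the specification `Π` (with reference measure `μ`,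
interaction `W` and coupling `λ`): `ν(f) = ∫ π_I(f|y) ν(dy)` for every bounded
interval `I` and every bounded continuous local `f`. -/
def IsGibbs {d : ℕ} (μ : Measure (Inc d)) (W : Ed d → ℝ → ℝ) (l : ℝ)
    (ν : Measure (Inc d)) : Prop :=
  IsProbabilityMeasure ν ∧
  ∀ a b : ℝ, a ≤ b → ∀ f : Inc d → ℝ, Continuous f → (∃ M : ℝ, ∀ x, |f x| ≤ M) →
    IsLocal f → ∫ x, f x ∂ν = ∫ y, ∫ x, f x ∂(gk μ W l a b y) ∂ν

/-- Translation of increment paths: `(τ_c x)_{st} = x_{s+c, t+c}`. -/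
def shift {d : ℕ} (c : ℝ) (x : Inc d) : Inc d :=
  ⟨⟨fun p => x.1 (p.1 + c, p.2 + c), by
      have hx := x.1.continuous; fun_prop⟩,
    by intro t; exact x.2.1 (t + c),
    by intro s u t; exact x.2.2 (s + c) (u + c) (t + c)⟩

/-- The finite-volume energy `H_T(x) = ∫_{[-T,T]²} W(x_{st}, s-t) ds dt`. -/
def HT {d : ℕ} (W : Ed d → ℝ → ℝ) (T : ℝ) (x : Inc d) : ℝ :=
  ∫ t in Icc (-T) T, ∫ s in Icc (-T) T, W (x.1 (s, t)) (s - t)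

/-- The finite-volume Gibbs measure `μ_{λ,T}`. -/
def muT {d : ℕ} (μ : Measure (Inc d)) (W : Ed d → ℝ → ℝ) (l T : ℝ) : Measure (Inc d) :=
  ((μ.withDensity fun x => ENNReal.ofReal (Real.exp (-(l * HT W T x)))) univ)⁻¹ •
    (μ.withDensity fun x => ENNReal.ofReal (Real.exp (-(l * HT W T x))))

/-- The comparison measure `ω_{[c,e]}` : normalized `e^{λC ‖x_{ce}‖} μ(dx)`. -/
def omegaM {d : ℕ} (μ : Measure (Inc d)) (lC c e : ℝ) : Measure (Inc d) :=
  ((μ.withDensity fun x => ENNReal.ofReal (Real.exp (lC * ‖x.1 (c, e)‖))) univ)⁻¹ •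
    (μ.withDensity fun x => ENNReal.ofReal (Real.exp (lC * ‖x.1 (c, e)‖)))

/-- Restriction to the increments in `[a,b]` (increments outside are set to zero);
its pushforward realizes the marginal of a measure on the σ-field `𝓕_{[a,b]}`. -/
def restr {d : ℕ} (a b : ℝ) (x : Inc d) : Inc d := blend a b x (zeroInc d)

/-- The discrete-model potential `U_{ij}(x) = ∫_i^{i+1} dt ∫_j^{j+1} ds W(x_{ts}, t-s)`. -/
def Uij {d : ℕ} (W : Ed d → ℝ → ℝ) (i j : ℤ) (x : Inc d) : ℝ :=
  ∫ t in Icc (i : ℝ) (i + 1), ∫ s in Icc (j : ℝ) (j + 1), W (x.1 (t, s)) (t - s)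

/-- `M_U(k) = sup_{|i-j| ≥ k} sup_x |U_{ij}(x)|` (in `ℝ≥0∞`). -/
def MU {d : ℕ} (W : Ed d → ℝ → ℝ) (k : ℕ) : ℝ≥0∞ :=
  ⨆ (i : ℤ) (j : ℤ) (_ : (k : ℤ) ≤ |i - j|) (x : Inc d), ENNReal.ofReal |Uij W i j x|

/-- The sup-distance `‖x_i - y_i‖` between the blocks over `τ_i = [iL, (i+1)L]`. -/
def bNorm {d : ℕ} (L : ℝ) (i : ℤ) (x y : Inc d) : ℝ :=
  sSup ((fun p => ‖x.1 p - y.1 p‖) ''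
    (Icc (i * L) ((i + 1) * L) ×ˢ Icc (i * L) ((i + 1) * L)))

/-- `y` and `z` have the same increments on every block `τ_k`, `k ≠ j`. -/
def AgreeOffBlock {d : ℕ} (L : ℝ) (j : ℤ) (y z : Inc d) : Prop :=
  ∀ k : ℤ, k ≠ j → ∀ p : ℝ × ℝ,
    p.1 ∈ Icc (k * L) ((k + 1) * L) → p.2 ∈ Icc (k * L) ((k + 1) * L) → y.1 p = z.1 p

/-- The segment `y^r = y + r (z - y)` in `𝒳`. -/
def lineInc {d : ℕ} (y z : Inc d) (r : ℝ) : Inc d :=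
  ⟨⟨fun p => y.1 p + r • (z.1 p - y.1 p), by
      have hy := y.1.continuous; have hz := z.1.continuous; fun_prop⟩,
    by intro t; simp [y.2.1, z.2.1],
    by
      intro s u t
      show (y.1 (s, u) + r • (z.1 (s, u) - y.1 (s, u)))
          + (y.1 (u, t) + r • (z.1 (u, t) - y.1 (u, t)))
          = y.1 (s, t) + r • (z.1 (s, t) - y.1 (s, t))
      rw [← y.2.2 s u t, ← z.2.2 s u t]
      module⟩

/-- A tempered measure (relative to block size `L`). -/
def Tempered {d : ℕ} (L : ℝ) (ν : Measure (Inc d)) : Prop :=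
  ∃ z : Inc d, ∃ M : ℝ, ∀ i : ℤ, ∫ x, bNorm L i x z ∂ν ≤ M

/-- The second Malliavin derivative `D_t D_s H_T(x) = 2∫_{-T}^{s∧t}du ∫_{s∨t}^{T}dv ∇∇W(x_{uv}, u-v)`. -/
def D2H {d : ℕ} (W : Ed d → ℝ → ℝ) (T s t : ℝ) (x : Inc d) : Ed d →L[ℝ] Ed d →L[ℝ] ℝ :=
  (2 : ℝ) • ∫ u in Icc (-T) (min s t), ∫ v in Icc (max s t) T, HessW W (x.1 (u, v)) (u - v)

/-- `A_{ab}(x) = 2λ ∫_a^b ds ∫_{-T}^s du ∫_s^T dv ∇_ξ W(x_{uv}, u-v)`, the integrated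
Malliavin derivative of `λ H_T` over `[a,b]`. -/
def Aab {d : ℕ} (W : Ed d → ℝ → ℝ) (l T a b : ℝ) (x : Inc d) : Ed d :=
  (2 * l) • ∫ s in Icc a b, ∫ u in Icc (-T) s, ∫ v in Icc s T,
    gradient (fun ξ => W ξ (u - v)) (x.1 (u, v))

/-- The UV-regularized Nelson interaction `W(ξ,t) = -1/(1+|ξ|²+|t|²)`, `d = 3`. -/
def WN : Ed 3 → ℝ → ℝ := fun ξ t => -(1 + ‖ξ‖ ^ 2 + t ^ 2)⁻¹

section NelsonAux

open Filter Topology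

lemma WN_cont : Continuous fun p : Ed 3 × ℝ => WN p.1 p.2 := by
  unfold WN
  refine (Continuous.inv₀ (by fun_prop) fun p => ?_).neg
  positivity

/-- Key polynomial inequality. -/
lemma frac_key (A B u : ℝ) (hA : 0 ≤ A) (hB : 0 ≤ B) (hu : 0 ≤ u) :
    (A + B) * (1 + u) ^ 3 ≤ 3 * ((1 + A ^ 2 + u ^ 2) * (1 + B ^ 2 + u ^ 2)) := by
  obtain ⟨r, hr0, hr2⟩ : ∃ r : ℝ, 0 < r ∧ r ^ 2 = 1 + u ^ 2 :=
    ⟨Real.sqrt (1 + u ^ 2), Real.sqrt_pos.2 (by positivity), Real.sq_sqrt (by positivity)⟩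
  obtain ⟨w, hw0, hw2⟩ : ∃ w : ℝ, 0 ≤ w ∧ w ^ 2 = 2 :=
    ⟨Real.sqrt 2, Real.sqrt_nonneg 2, Real.sq_sqrt (by norm_num)⟩
  have hP : (0:ℝ) < 1 + A ^ 2 + u ^ 2 := by positivity
  have hQ : (0:ℝ) < 1 + B ^ 2 + u ^ 2 := by positivity
  have hwr : 0 ≤ w * r := mul_nonneg hw0 hr0.le
  have hsq : (1 + u) ^ 2 ≤ (w * r) ^ 2 := by nlinarith [sq_nonneg (1 - u)]
  have h2 : 1 + u ≤ w * r := by nlinarith [hsq, hwr]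
  have hw4 : w ^ 3 ≤ 3 := by nlinarith [sq_nonneg (w - 1.5)]
  have h3 : (1 + u) ^ 3 ≤ 3 * r ^ 3 := by
    calc (1 + u) ^ 3 ≤ (w * r) ^ 3 := pow_le_pow_left₀ (by linarith) h2 3
    _ = w ^ 3 * r ^ 3 := by ring
    _ ≤ 3 * r ^ 3 := mul_le_mul_of_nonneg_right hw4 (by positivity)
  have e1 : 2 * A * r ≤ 1 + A ^ 2 + u ^ 2 := by nlinarith [sq_nonneg (A - r)]
  have e2 : 2 * B * r ≤ 1 + B ^ 2 + u ^ 2 := by nlinarith [sq_nonneg (B - r)]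
  have e3 : r ^ 2 ≤ 1 + A ^ 2 + u ^ 2 := by nlinarith
  have e4 : r ^ 2 ≤ 1 + B ^ 2 + u ^ 2 := by nlinarith
  have f1 : (2 * A * r) * r ^ 2 ≤ (1 + A ^ 2 + u ^ 2) * (1 + B ^ 2 + u ^ 2) :=
    mul_le_mul e1 e4 (by positivity) hP.le
  have f2 : (2 * B * r) * r ^ 2 ≤ (1 + B ^ 2 + u ^ 2) * (1 + A ^ 2 + u ^ 2) :=
    mul_le_mul e2 e3 (by positivity) hQ.le
  have h4 : (A + B) * r ^ 3 ≤ (1 + A ^ 2 + u ^ 2) * (1 + B ^ 2 + u ^ 2) := by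
    nlinarith [f1, f2]
  calc (A + B) * (1 + u) ^ 3 ≤ (A + B) * (3 * r ^ 3) :=
        mul_le_mul_of_nonneg_left h3 (by positivity)
  _ = 3 * ((A + B) * r ^ 3) := by ring
  _ ≤ 3 * ((1 + A ^ 2 + u ^ 2) * (1 + B ^ 2 + u ^ 2)) := by linarith

/-- Pointwise Lipschitz-type bound for `WN`. -/
lemma WN_sub_le (ξ ζ : Ed 3) (u : ℝ) (hu : 0 ≤ u) :
    |WN ξ u - WN ζ u| ≤ 3 * ‖ξ - ζ‖ * ((1 + u) ^ 3)⁻¹ := by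
  have hP : (0:ℝ) < 1 + ‖ξ‖ ^ 2 + u ^ 2 := by positivity
  have hQ : (0:ℝ) < 1 + ‖ζ‖ ^ 2 + u ^ 2 := by positivity
  have heq : WN ξ u - WN ζ u
      = (‖ξ‖ ^ 2 - ‖ζ‖ ^ 2) / ((1 + ‖ξ‖ ^ 2 + u ^ 2) * (1 + ‖ζ‖ ^ 2 + u ^ 2)) := by
    simp only [WN]
    field_simp
    ring
  have h1 : |‖ξ‖ ^ 2 - ‖ζ‖ ^ 2| ≤ ‖ξ - ζ‖ * (‖ξ‖ + ‖ζ‖) := by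
    have e : |‖ξ‖ ^ 2 - ‖ζ‖ ^ 2| = |‖ξ‖ - ‖ζ‖| * (‖ξ‖ + ‖ζ‖) := by
      rw [show ‖ξ‖ ^ 2 - ‖ζ‖ ^ 2 = (‖ξ‖ - ‖ζ‖) * (‖ξ‖ + ‖ζ‖) from by ring, abs_mul,
        abs_of_nonneg (add_nonneg (norm_nonneg ξ) (norm_nonneg ζ))]
    rw [e]
    exact mul_le_mul_of_nonneg_right (abs_norm_sub_norm_le ξ ζ)
      (add_nonneg (norm_nonneg ξ) (norm_nonneg ζ))
  have key := frac_key ‖ξ‖ ‖ζ‖ u (norm_nonneg _) (norm_nonneg _) hu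
  rw [heq, abs_div, abs_of_pos (mul_pos hP hQ),
    show (3:ℝ) * ‖ξ - ζ‖ * ((1 + u) ^ 3)⁻¹ = (3 * ‖ξ - ζ‖) / ((1 + u) ^ 3) from
      (div_eq_mul_inv _ _).symm,
    div_le_div_iff₀ (mul_pos hP hQ) (pow_pos (by linarith : (0:ℝ) < 1 + u) 3)]
  nlinarith [mul_le_mul_of_nonneg_right h1
      (pow_nonneg (by linarith : (0:ℝ) ≤ 1 + u) 3),
    mul_le_mul_of_nonneg_left key (norm_nonneg (ξ - ζ))]

lemma inner3_hasDeriv (c : ℝ) (hc : 0 < c) :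
    ∀ s ∈ Ici (0:ℝ), HasDerivAt (fun s : ℝ => -(2 * (c + s) ^ 2)⁻¹) (((c + s) ^ 3)⁻¹) s := by
  intro s hs
  have hcs : (0:ℝ) < c + s := add_pos_of_pos_of_nonneg hc hs
  have h0 : HasDerivAt (fun s : ℝ => c + s) 1 s := (hasDerivAt_id s).const_add c
  have h1 : HasDerivAt (fun s : ℝ => 2 * (c + s) ^ 2) (2 * (2 * (c + s) ^ 1 * 1)) s :=
    (h0.pow 2).const_mul 2
  have h2 : HasDerivAt (fun s : ℝ => -(2 * (c + s) ^ 2)⁻¹) _ s := (h1.inv (by positivity)).neg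
  convert h2 using 1
  field_simp

lemma inner3_tendsto (c : ℝ) (hc : 0 < c) :
    Tendsto (fun s : ℝ => -(2 * (c + s) ^ 2)⁻¹) atTop (𝓝 0) := by
  have h1 : Tendsto (fun s : ℝ => 2 * (c + s) ^ 2) atTop atTop := by
    apply Tendsto.const_mul_atTop (by norm_num : (0:ℝ) < 2)
    exact (tendsto_pow_atTop (by norm_num : 2 ≠ 0)).comp
      (tendsto_atTop_add_const_left _ c tendsto_id)
  have := h1.inv_tendsto_atTop.neg
  simpa using this

lemma inner3_integrableOn (c : ℝ) (hc : 0 < c) :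
    IntegrableOn (fun s : ℝ => ((c + s) ^ 3)⁻¹) (Ioi 0) :=
  integrableOn_Ioi_deriv_of_nonneg' (inner3_hasDeriv c hc)
    (fun s hs => (inv_pos.2 (pow_pos (by linarith [mem_Ioi.1 hs] : (0:ℝ) < c + s) 3)).le)
    (inner3_tendsto c hc)

lemma inner3_integral (c : ℝ) (hc : 0 < c) :
    ∫ s in Ioi (0:ℝ), ((c + s) ^ 3)⁻¹ = (2 * c ^ 2)⁻¹ := by
  rw [integral_Ioi_of_hasDerivAt_of_tendsto' (inner3_hasDeriv c hc)
    (inner3_integrableOn c hc) (inner3_tendsto c hc)]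
  norm_num

lemma inner2_hasDeriv (c : ℝ) (hc : 0 < c) :
    ∀ s ∈ Ici (0:ℝ), HasDerivAt (fun s : ℝ => -(2 * (c + s))⁻¹) ((2 * (c + s) ^ 2)⁻¹) s := by
  intro s hs
  have hcs : (0:ℝ) < c + s := add_pos_of_pos_of_nonneg hc hs
  have h0 : HasDerivAt (fun s : ℝ => c + s) 1 s := (hasDerivAt_id s).const_add c
  have h1 : HasDerivAt (fun s : ℝ => 2 * (c + s)) (2 * 1) s := h0.const_mul 2
  have h2 : HasDerivAt (fun s : ℝ => -(2 * (c + s))⁻¹) _ s := (h1.inv (by positivity)).neg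
  convert h2 using 1
  field_simp

lemma inner2_tendsto (c : ℝ) (hc : 0 < c) :
    Tendsto (fun s : ℝ => -(2 * (c + s))⁻¹) atTop (𝓝 0) := by
  have h1 : Tendsto (fun s : ℝ => 2 * (c + s)) atTop atTop := by
    apply Tendsto.const_mul_atTop (by norm_num : (0:ℝ) < 2)
    exact tendsto_atTop_add_const_left _ c tendsto_id
  have := h1.inv_tendsto_atTop.neg
  simpa using this

lemma inner2_integrableOn (c : ℝ) (hc : 0 < c) :
    IntegrableOn (fun s : ℝ => (2 * (c + s) ^ 2)⁻¹) (Ioi 0) :=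
  integrableOn_Ioi_deriv_of_nonneg' (inner2_hasDeriv c hc)
    (fun s hs => by positivity) (inner2_tendsto c hc)

lemma inner2_integral (c : ℝ) (hc : 0 < c) :
    ∫ s in Ioi (0:ℝ), (2 * (c + s) ^ 2)⁻¹ = (2 * c)⁻¹ := by
  rw [integral_Ioi_of_hasDerivAt_of_tendsto' (inner2_hasDeriv c hc)
    (inner2_integrableOn c hc) (inner2_tendsto c hc)]
  norm_num

lemma map_neg_Iio :
    (volume.restrict (Iio (0:ℝ))).map Neg.neg = volume.restrict (Ioi (0:ℝ)) := by
  have h : Iio (0:ℝ) = Neg.neg ⁻¹' Ioi (0:ℝ) := by ext t; simp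
  rw [h, ← Measure.restrict_map measurable_neg measurableSet_Ioi,
    Measure.map_neg_eq_self (volume : Measure ℝ)]

lemma integrableOn_negIio {f : ℝ → ℝ} (hf : IntegrableOn f (Ioi (0:ℝ))) :
    IntegrableOn (fun t => f (-t)) (Iio (0:ℝ)) := by
  have A : MeasurableEmbedding (Neg.neg : ℝ → ℝ) :=
    (Homeomorph.neg ℝ).isClosedEmbedding.measurableEmbedding
  have h : Integrable f ((volume.restrict (Iio (0:ℝ))).map Neg.neg) := by
    rwa [map_neg_Iio]
  exact A.integrable_map_iff.1 h

lemma integral_negIio (f : ℝ → ℝ) :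
    ∫ t in Iio (0:ℝ), f (-t) = ∫ s in Ioi (0:ℝ), f s := by
  have A : MeasurableEmbedding (Neg.neg : ℝ → ℝ) :=
    (Homeomorph.neg ℝ).isClosedEmbedding.measurableEmbedding
  conv_rhs => rw [← map_neg_Iio]
  exact (A.integral_map _).symm

lemma outer_integrableOn (c : ℝ) (hc : 0 < c) :
    IntegrableOn (fun t : ℝ => (2 * (c - t) ^ 2)⁻¹) (Iio 0) := by
  have h := integrableOn_negIio (inner2_integrableOn c hc)
  have e : (fun t : ℝ => (2 * (c - t) ^ 2)⁻¹) = fun t : ℝ => (2 * (c + -t) ^ 2)⁻¹ := by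
    funext t; rw [sub_eq_add_neg]
  rw [e]; exact h

lemma outer_integral (c : ℝ) (hc : 0 < c) :
    ∫ t in Iio (0:ℝ), (2 * (c - t) ^ 2)⁻¹ = (2 * c)⁻¹ := by
  have e : (fun t : ℝ => (2 * (c - t) ^ 2)⁻¹) = fun t : ℝ => (2 * (c + -t) ^ 2)⁻¹ := by
    funext t; rw [sub_eq_add_neg]
  rw [e, integral_negIio (fun s => (2 * (c + s) ^ 2)⁻¹), inner2_integral c hc]

/-- The integrand of `Q` for the Nelson model. -/
def fQ (x : Inc 3) (a : ℝ) (ξ : Ed 3) (t s : ℝ) : ℝ :=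
  |WN (ξ + x.1 (s, t)) (a + s - t) - WN (x.1 (s, t)) (a + s - t)|

lemma fQ_nonneg (x : Inc 3) (a : ℝ) (ξ : Ed 3) (t s : ℝ) : 0 ≤ fQ x a ξ t s :=
  abs_nonneg _

lemma fQ_cont (x : Inc 3) (a : ℝ) (ξ : Ed 3) :
    Continuous fun p : ℝ × ℝ => fQ x a ξ p.1 p.2 := by
  have hx : Continuous x.1 := x.1.continuous
  have h1 : Continuous fun p : ℝ × ℝ => x.1 (p.2, p.1) :=
    hx.comp (continuous_snd.prodMk continuous_fst)
  have h2 : Continuous fun p : ℝ × ℝ => a + p.2 - p.1 := by fun_prop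
  exact ((WN_cont.comp ((continuous_const.add h1).prodMk h2)).sub
    (WN_cont.comp (h1.prodMk h2))).abs

lemma fQ_le (x : Inc 3) (a : ℝ) (ha : 0 ≤ a) (ξ : Ed 3) {t s : ℝ} (ht : t < 0) (hs : 0 < s) :
    fQ x a ξ t s ≤ 3 * ‖ξ‖ * ((1 + a - t + s) ^ 3)⁻¹ := by
  have hu : 0 ≤ a + s - t := by linarith
  have h := WN_sub_le (ξ + x.1 (s, t)) (x.1 (s, t)) (a + s - t) hu
  rw [add_sub_cancel_right, show (1:ℝ) + (a + s - t) = 1 + a - t + s from by ring] at h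
  exact h

lemma fQ_sub_le (x : Inc 3) (a : ℝ) (ha : 0 ≤ a) (ξ ζ : Ed 3) {t s : ℝ}
    (ht : t < 0) (hs : 0 < s) :
    |fQ x a ξ t s - fQ x a ζ t s| ≤ 3 * ‖ξ - ζ‖ * ((1 + a - t + s) ^ 3)⁻¹ := by
  have hu : 0 ≤ a + s - t := by linarith
  have h0 : |fQ x a ξ t s - fQ x a ζ t s|
      ≤ |WN (ξ + x.1 (s, t)) (a + s - t) - WN (ζ + x.1 (s, t)) (a + s - t)| := by
    have h := abs_abs_sub_abs_le_abs_sub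
      (WN (ξ + x.1 (s, t)) (a + s - t) - WN (x.1 (s, t)) (a + s - t))
      (WN (ζ + x.1 (s, t)) (a + s - t) - WN (x.1 (s, t)) (a + s - t))
    rw [sub_sub_sub_cancel_right] at h
    exact h
  have h := WN_sub_le (ξ + x.1 (s, t)) (ζ + x.1 (s, t)) (a + s - t) hu
  rw [add_sub_add_right_eq_sub, show (1:ℝ) + (a + s - t) = 1 + a - t + s from by ring] at h
  exact h0.trans h

lemma fQ_integrableOn (x : Inc 3) (a : ℝ) (ha : 0 ≤ a) (ξ : Ed 3) {t : ℝ} (ht : t < 0) :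
    IntegrableOn (fQ x a ξ t) (Ioi 0) := by
  have hc : 0 < 1 + a - t := by linarith
  have hmaj : IntegrableOn (fun s => 3 * ‖ξ‖ * ((1 + a - t + s) ^ 3)⁻¹) (Ioi 0) :=
    (inner3_integrableOn _ hc).const_mul _
  refine hmaj.mono' ?_ ?_
  · exact ((fQ_cont x a ξ).comp (continuous_const.prodMk continuous_id)).aestronglyMeasurable
  · rw [ae_restrict_iff' measurableSet_Ioi]
    refine ae_of_all _ fun s hs => ?_
    rw [Real.norm_eq_abs, abs_of_nonneg (fQ_nonneg x a ξ t s)]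
    exact fQ_le x a ha ξ ht hs

/-- Inner integral of `Q`. -/
def IQ (x : Inc 3) (a : ℝ) (ξ : Ed 3) (t : ℝ) : ℝ := ∫ s in Ioi (0:ℝ), fQ x a ξ t s

lemma IQ_stronglyMeasurable (x : Inc 3) (a : ℝ) (ξ : Ed 3) :
    StronglyMeasurable (IQ x a ξ) :=
  (fQ_cont x a ξ).stronglyMeasurable.integral_prod_right'

lemma IQ_le (x : Inc 3) (a : ℝ) (ha : 0 ≤ a) (ξ : Ed 3) {t : ℝ} (ht : t < 0) :
    |IQ x a ξ t| ≤ 3 * ‖ξ‖ * (2 * (1 + a - t) ^ 2)⁻¹ := by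
  have hc : 0 < 1 + a - t := by linarith
  have h1 : |IQ x a ξ t| ≤ ∫ s in Ioi (0:ℝ), |fQ x a ξ t s| := by
    simpa [Real.norm_eq_abs, IQ] using
      norm_integral_le_integral_norm (μ := volume.restrict (Ioi 0)) (fQ x a ξ t)
  have h2 : ∫ s in Ioi (0:ℝ), |fQ x a ξ t s|
      ≤ ∫ s in Ioi (0:ℝ), 3 * ‖ξ‖ * ((1 + a - t + s) ^ 3)⁻¹ := by
    refine setIntegral_mono_on ((fQ_integrableOn x a ha ξ ht).abs)
      ((inner3_integrableOn _ hc).const_mul _) measurableSet_Ioi fun s hs => ?_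
    rw [abs_of_nonneg (fQ_nonneg x a ξ t s)]
    exact fQ_le x a ha ξ ht hs
  have h3 : ∫ s in Ioi (0:ℝ), 3 * ‖ξ‖ * ((1 + a - t + s) ^ 3)⁻¹
      = 3 * ‖ξ‖ * (2 * (1 + a - t) ^ 2)⁻¹ := by
    rw [integral_const_mul, inner3_integral _ hc]
  linarith

lemma IQ_sub_le (x : Inc 3) (a : ℝ) (ha : 0 ≤ a) (ξ ζ : Ed 3) {t : ℝ} (ht : t < 0) :
    |IQ x a ξ t - IQ x a ζ t| ≤ 3 * ‖ξ - ζ‖ * (2 * (1 + a - t) ^ 2)⁻¹ := by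
  have hc : 0 < 1 + a - t := by linarith
  have hiξ := fQ_integrableOn x a ha ξ ht
  have hiζ := fQ_integrableOn x a ha ζ ht
  have heq : IQ x a ξ t - IQ x a ζ t
      = ∫ s in Ioi (0:ℝ), (fQ x a ξ t s - fQ x a ζ t s) := (integral_sub hiξ hiζ).symm
  rw [heq]
  have h1 : |∫ s in Ioi (0:ℝ), (fQ x a ξ t s - fQ x a ζ t s)|
      ≤ ∫ s in Ioi (0:ℝ), |fQ x a ξ t s - fQ x a ζ t s| := by
    simpa [Real.norm_eq_abs] using
      norm_integral_le_integral_norm (μ := volume.restrict (Ioi 0))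
        (fun s => fQ x a ξ t s - fQ x a ζ t s)
  have h2 : ∫ s in Ioi (0:ℝ), |fQ x a ξ t s - fQ x a ζ t s|
      ≤ ∫ s in Ioi (0:ℝ), 3 * ‖ξ - ζ‖ * ((1 + a - t + s) ^ 3)⁻¹ :=
    setIntegral_mono_on (hiξ.sub hiζ).abs ((inner3_integrableOn _ hc).const_mul _)
      measurableSet_Ioi fun s hs => fQ_sub_le x a ha ξ ζ ht hs
  have h3 : ∫ s in Ioi (0:ℝ), 3 * ‖ξ - ζ‖ * ((1 + a - t + s) ^ 3)⁻¹
      = 3 * ‖ξ - ζ‖ * (2 * (1 + a - t) ^ 2)⁻¹ := by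
    rw [integral_const_mul, inner3_integral _ hc]
  linarith

lemma IQ_integrableOn (x : Inc 3) (a : ℝ) (ha : 0 ≤ a) (ξ : Ed 3) :
    IntegrableOn (IQ x a ξ) (Iio 0) := by
  have h0 : (0:ℝ) < 1 + a := by linarith
  have hmaj : IntegrableOn (fun t : ℝ => 3 * ‖ξ‖ * (2 * (1 + a - t) ^ 2)⁻¹) (Iio 0) :=
    (outer_integrableOn _ h0).const_mul _
  refine hmaj.mono' (IQ_stronglyMeasurable x a ξ).aestronglyMeasurable ?_
  rw [ae_restrict_iff' measurableSet_Iio]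
  refine ae_of_all _ fun t ht => ?_
  rw [Real.norm_eq_abs]
  exact IQ_le x a ha ξ ht

lemma Q_eq (x : Inc 3) (a : ℝ) (ξ : Ed 3) :
    Q WN x ξ a = ∫ t in Iio (0:ℝ), IQ x a ξ t := rfl

lemma Q_sub_le (x : Inc 3) (a : ℝ) (ha : 0 ≤ a) (ξ ζ : Ed 3) :
    |Q WN x ξ a - Q WN x ζ a| ≤ 2 * (1 + a)⁻¹ * ‖ξ - ζ‖ := by
  have h0 : (0:ℝ) < 1 + a := by linarith
  rw [Q_eq, Q_eq, ← integral_sub (IQ_integrableOn x a ha ξ) (IQ_integrableOn x a ha ζ)]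
  have h1 : |∫ t in Iio (0:ℝ), (IQ x a ξ t - IQ x a ζ t)|
      ≤ ∫ t in Iio (0:ℝ), |IQ x a ξ t - IQ x a ζ t| := by
    simpa [Real.norm_eq_abs] using
      norm_integral_le_integral_norm (μ := volume.restrict (Iio 0))
        (fun t => IQ x a ξ t - IQ x a ζ t)
  have h2 : ∫ t in Iio (0:ℝ), |IQ x a ξ t - IQ x a ζ t|
      ≤ ∫ t in Iio (0:ℝ), 3 * ‖ξ - ζ‖ * (2 * (1 + a - t) ^ 2)⁻¹ :=
    setIntegral_mono_on
      (((IQ_integrableOn x a ha ξ).sub (IQ_integrableOn x a ha ζ)).abs)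
      ((outer_integrableOn _ h0).const_mul _) measurableSet_Iio
      fun t ht => IQ_sub_le x a ha ξ ζ ht
  have h3 : ∫ t in Iio (0:ℝ), 3 * ‖ξ - ζ‖ * (2 * (1 + a - t) ^ 2)⁻¹
      = 3 * ‖ξ - ζ‖ * (2 * (1 + a))⁻¹ := by
    rw [integral_const_mul, outer_integral _ h0]
  have h4 : 3 * ‖ξ - ζ‖ * (2 * (1 + a))⁻¹ ≤ 2 * (1 + a)⁻¹ * ‖ξ - ζ‖ := by
    rw [mul_inv]
    have hn : (0:ℝ) ≤ ‖ξ - ζ‖ := norm_nonneg _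
    have hi : (0:ℝ) ≤ (1 + a)⁻¹ := by positivity
    nlinarith [mul_nonneg hn hi]
  linarith

lemma Q_lip (x : Inc 3) (a : ℝ) (ha : 0 ≤ a) :
    LipschitzWith (Real.toNNReal (2 * (1 + a)⁻¹)) (fun ζ : Ed 3 => Q WN x ζ a) := by
  apply LipschitzWith.of_dist_le_mul
  intro ξ ζ
  rw [Real.coe_toNNReal _ (by positivity), Real.dist_eq, dist_eq_norm]
  exact Q_sub_le x a ha ξ ζ

end NelsonAux

/-- the UV-regularized Nelson model `W(ξ,t) = -1/(1+|ξ|²+|t|²)` in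
`d = 3` satisfies `|∇_ξ Q(x,ξ,a)| ≤ C (1+|a|)^{-1}`, hence (H2), and also (H1). -/
theorem nelson_satisfies_H1_H2 :
    (∃ C : ℝ, ∀ x : Inc 3, ∀ a : ℝ, 0 ≤ a → ∀ ξ : Ed 3,
        ‖gradient (fun ζ => Q WN x ζ a) ξ‖ ≤ C * (1 + |a|)⁻¹) ∧
    H2 WN ∧ H1 WN := by
  refine ⟨⟨2, fun x a ha ξ => ?_⟩, ?_, ?_, ?_⟩
  · -- gradient bound
    have h := norm_fderiv_le_of_lipschitz ℝ (Q_lip x a ha) (x₀ := ξ)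
    rw [Real.coe_toNNReal _ (by positivity)] at h
    have hg : ‖gradient (fun ζ => Q WN x ζ a) ξ‖
        = ‖fderiv ℝ (fun ζ => Q WN x ζ a) ξ‖ := by
      show ‖(InnerProductSpace.toDual ℝ (Ed 3)).symm (fderiv ℝ (fun ζ => Q WN x ζ a) ξ)‖ = _
      exact LinearIsometryEquiv.norm_map _ _
    rw [hg, abs_of_nonneg ha]
    exact h
  · -- H2
    refine ⟨2, fun x ξ a ha => ?_⟩
    have h0 : (0:ℝ) < 1 + a := by linarith
    have step1 : ∀ t ∈ Iio (0:ℝ),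
        (∫⁻ s in Ioi (0:ℝ), ENNReal.ofReal (fQ x a ξ t s))
          ≤ ENNReal.ofReal (3 * ‖ξ‖ * (2 * (1 + a - t) ^ 2)⁻¹) := by
      intro t ht
      have ht' : t < 0 := ht
      have hc : 0 < 1 + a - t := by linarith
      calc (∫⁻ s in Ioi (0:ℝ), ENNReal.ofReal (fQ x a ξ t s))
          ≤ ∫⁻ s in Ioi (0:ℝ), ENNReal.ofReal (3 * ‖ξ‖ * ((1 + a - t + s) ^ 3)⁻¹) :=
            setLIntegral_mono' measurableSet_Ioi fun s hs =>
              ENNReal.ofReal_le_ofReal (fQ_le x a ha ξ ht' hs)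
        _ = ENNReal.ofReal (∫ s in Ioi (0:ℝ), 3 * ‖ξ‖ * ((1 + a - t + s) ^ 3)⁻¹) := by
            refine (ofReal_integral_eq_lintegral_ofReal
              ((inner3_integrableOn _ hc).const_mul _) ?_).symm
            refine (ae_restrict_iff' measurableSet_Ioi).2 (ae_of_all _ fun s hs => ?_)
            have hss : (0:ℝ) < s := hs
            have : (0:ℝ) < 1 + a - t + s := by linarith
            positivity
        _ = ENNReal.ofReal (3 * ‖ξ‖ * (2 * (1 + a - t) ^ 2)⁻¹) := by
            rw [integral_const_mul, inner3_integral _ hc]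
    have hQe : Qe WN x ξ a
        = ∫⁻ t in Iio (0:ℝ), ∫⁻ s in Ioi (0:ℝ), ENNReal.ofReal (fQ x a ξ t s) := rfl
    rw [hQe]
    calc (∫⁻ t in Iio (0:ℝ), ∫⁻ s in Ioi (0:ℝ), ENNReal.ofReal (fQ x a ξ t s))
        ≤ ∫⁻ t in Iio (0:ℝ), ENNReal.ofReal (3 * ‖ξ‖ * (2 * (1 + a - t) ^ 2)⁻¹) :=
          setLIntegral_mono' measurableSet_Iio step1
      _ = ENNReal.ofReal (∫ t in Iio (0:ℝ), 3 * ‖ξ‖ * (2 * (1 + a - t) ^ 2)⁻¹) := by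
          refine (ofReal_integral_eq_lintegral_ofReal
            ((outer_integrableOn _ h0).const_mul _) ?_).symm
          exact ae_of_all _ fun t => by positivity
      _ = ENNReal.ofReal (3 * ‖ξ‖ * (2 * (1 + a))⁻¹) := by
          rw [integral_const_mul, outer_integral _ h0]
      _ ≤ ENNReal.ofReal (2 * (1 + ‖ξ‖)) := by
          refine ENNReal.ofReal_le_ofReal ?_
          have h1 : (2 * (1 + a))⁻¹ ≤ 2⁻¹ := by
            apply inv_anti₀ (by norm_num)
            linarith
          have hn : (0:ℝ) ≤ ‖ξ‖ := norm_nonneg _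
          nlinarith
  · -- H1, first part
    refine ⟨1, fun a b hab x => ?_⟩
    have hW1 : ∀ (ξ : Ed 3) (u : ℝ), |WN ξ u| ≤ 1 := by
      intro ξ u
      simp only [WN]
      rw [abs_neg, abs_of_nonneg (by positivity)]
      exact inv_le_one_of_one_le₀ (by nlinarith [norm_nonneg ξ, sq_nonneg ‖ξ‖, sq_nonneg u])
    have hvol : volume (Icc a b) < ⊤ := measure_Icc_lt_top
    have hvol' : (volume (Icc a b)).toReal = b - a := by
      rw [Real.volume_Icc, ENNReal.toReal_ofReal (by linarith)]
    have hin : ∀ t : ℝ, |∫ s in Icc a b, WN (x.1 (s, t)) (t - s)| ≤ b - a := by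
      intro t
      have := norm_setIntegral_le_of_norm_le_const (f := fun s => WN (x.1 (s, t)) (t - s))
        (C := 1) hvol
        (fun s _ => by rw [Real.norm_eq_abs]; exact hW1 (x.1 (s, t)) (t - s))
      rw [Real.norm_eq_abs, Measure.real, hvol', one_mul] at this
      exact this
    have hU : |U WN a b x| ≤ (b - a) * (b - a) := by
      have := norm_setIntegral_le_of_norm_le_const
        (f := fun t => ∫ s in Icc a b, WN (x.1 (s, t)) (t - s)) (C := b - a)
        hvol (fun t _ => by rw [Real.norm_eq_abs]; exact hin t)
      rw [Real.norm_eq_abs, Measure.real, hvol'] at this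
      exact this
    calc |U WN a b x| ≤ (b - a) * (b - a) := hU
      _ = 1 * (b - a) ^ 2 := by ring
  · -- H1, second part
    refine ⟨ENNReal.ofReal Real.pi, ENNReal.ofReal_ne_top, fun x => ?_⟩
    have hbd : ∀ t : ℝ, |WN (x.1 (0, t)) (|t|)| ≤ (1 + t ^ 2)⁻¹ := by
      intro t
      simp only [WN]
      rw [abs_neg, abs_of_nonneg (by positivity)]
      apply inv_anti₀ (by positivity)
      nlinarith [sq_abs t, sq_nonneg ‖x.1 (0, t)‖]
    calc (∫⁻ t : ℝ, ENNReal.ofReal |WN (x.1 (0, t)) (|t|)|)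
        ≤ ∫⁻ t : ℝ, ENNReal.ofReal ((1 + t ^ 2)⁻¹) :=
          lintegral_mono fun t => ENNReal.ofReal_le_ofReal (hbd t)
      _ = ENNReal.ofReal (∫ t : ℝ, (1 + t ^ 2)⁻¹) :=
          (ofReal_integral_eq_lintegral_ofReal integrable_inv_one_add_sq
            (ae_of_all _ fun t => by positivity)).symm
      _ = ENNReal.ofReal Real.pi := by rw [integral_univ_inv_one_add_sq]
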